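/- Let $0 < \alpha < 1$, $p = n/(n+\alpha)$, and let $a$ be an integrable function supported in the cube $Q = Q(x_0, r)$ with $\int a = 0$ and $\int_Q |a(y)|\,dy \le |Q| \cdot w(Q)^{-1/p}$. Then for every $x \notin 2\sqrt{n}\, Q$, the intrinsic Lusin area function satisfies $S_\alpha(a)(x) \le C \cdot \frac{r^{n+\alpha}}{w(Q)^{1/p}} \cdot \frac{1}{|x - x_0|^{n+\alpha}} \le C' \cdot w(Q)^{-1/p}$, with constants depending only on $n$ and $\alpha$. -/

import Mathlib

open MeasureTheory Set Metric ENNReal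

noncomputable section

/-- The axis-parallel cube centered at `x0` with side length `r`. -/
def cube (n : ℕ) (x0 : EuclideanSpace ℝ (Fin n)) (r : ℝ) : Set (EuclideanSpace ℝ (Fin n)) :=
  {x | ∀ i, |x i - x0 i| ≤ r / 2}

/-- The weighted measure `w(E) = ∫_E w`. -/
def wm (n : ℕ) (w : EuclideanSpace ℝ (Fin n) → ℝ) (s : Set (EuclideanSpace ℝ (Fin n))) : ℝ≥0∞ :=
  ∫⁻ x in s, ENNReal.ofReal (w x)

/-- The intrinsic Hölder class 𝒞_α. -/
def holderClass (n : ℕ) (α : ℝ) : Set (EuclideanSpace ℝ (Fin n) → ℝ) :=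
  {φ | Function.support φ ⊆ closedBall 0 1 ∧ (∫ x, φ x = 0) ∧
    ∀ x x', |φ x - φ x'| ≤ ‖x - x'‖ ^ α}

/-- `f * φ_t (x)` where `φ_t(x) = t^{-n} φ(x/t)`. -/
def convDil (n : ℕ) (f φ : EuclideanSpace ℝ (Fin n) → ℝ) (t : ℝ) (x : EuclideanSpace ℝ (Fin n)) : ℝ :=
  ∫ y, f y * ((t ^ n)⁻¹ * φ (t⁻¹ • (x - y)))

/-- `A_α(f)(y,t) = sup_{φ ∈ 𝒞_α} |f * φ_t(y)|`. -/
def intA (n : ℕ) (α : ℝ) (f : EuclideanSpace ℝ (Fin n) → ℝ) (y : EuclideanSpace ℝ (Fin n)) (t : ℝ) : ℝ≥0∞ :=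
  ⨆ φ ∈ holderClass n α, ENNReal.ofReal |convDil n f φ t y|

/-- The intrinsic Littlewood–Paley g-function. -/
def gFun (n : ℕ) (α : ℝ) (f : EuclideanSpace ℝ (Fin n) → ℝ) (x : EuclideanSpace ℝ (Fin n)) : ℝ≥0∞ :=
  (∫⁻ t in Ioi (0 : ℝ), (intA n α f x t) ^ 2 * (ENNReal.ofReal t)⁻¹) ^ (1/2 : ℝ)

/-- The varying-aperture intrinsic square function `S_{α,β}`. -/
def sFun (n : ℕ) (α β : ℝ) (f : EuclideanSpace ℝ (Fin n) → ℝ) (x : EuclideanSpace ℝ (Fin n)) : ℝ≥0∞ :=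
  (∫⁻ t in Ioi (0 : ℝ), ∫⁻ y in ball x (β * t),
      (intA n α f y t) ^ 2 * (ENNReal.ofReal (t ^ (n + 1)))⁻¹) ^ (1/2 : ℝ)

/-- The intrinsic `g^*_λ` function. -/
def gStar (n : ℕ) (α lam : ℝ) (f : EuclideanSpace ℝ (Fin n) → ℝ) (x : EuclideanSpace ℝ (Fin n)) : ℝ≥0∞ :=
  (∫⁻ t in Ioi (0 : ℝ), ∫⁻ y,
      (ENNReal.ofReal (t / (t + ‖x - y‖))) ^ (lam * n) *
        (intA n α f y t) ^ 2 * (ENNReal.ofReal (t ^ (n + 1)))⁻¹) ^ (1/2 : ℝ)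

/-- The `A_1` condition with constant `A`. -/
def isA1 (n : ℕ) (w : EuclideanSpace ℝ (Fin n) → ℝ) (A : ℝ) : Prop :=
  ∀ (x0 : EuclideanSpace ℝ (Fin n)) (r : ℝ), 0 < r →
    (∫ x in cube n x0 r, w x) ≤ A * r ^ n * essInf w (volume.restrict (cube n x0 r))

/-- The `A_q` condition, `q > 1`, with constant `A`. -/
def isAq (n : ℕ) (w : EuclideanSpace ℝ (Fin n) → ℝ) (q A : ℝ) : Prop :=
  ∀ (x0 : EuclideanSpace ℝ (Fin n)) (r : ℝ), 0 < r →
    ((r ^ n)⁻¹ * ∫ x in cube n x0 r, w x) *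
      ((r ^ n)⁻¹ * ∫ x in cube n x0 r, (w x) ^ (-(1 / (q - 1)) : ℝ)) ^ (q - 1) ≤ A

end

section AuxLemmas
open MeasureTheory Set Metric ENNReal
variable {n : ℕ} {α : ℝ}

lemma holder_continuous (hα0 : 0 < α) {φ : EuclideanSpace ℝ (Fin n) → ℝ}
    (hφ : φ ∈ holderClass n α) : Continuous φ := by
  obtain ⟨-, -, hH⟩ := hφ
  rw [Metric.continuous_iff]
  intro x ε hε
  refine ⟨ε ^ α⁻¹, Real.rpow_pos_of_pos hε _, fun x' hx' => ?_⟩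
  have h1 : dist (φ x') (φ x) ≤ dist x' x ^ α := by
    rw [Real.dist_eq, dist_eq_norm]
    exact hH x' x
  refine h1.trans_lt ?_
  calc dist x' x ^ α < (ε ^ α⁻¹) ^ α :=
        Real.rpow_lt_rpow dist_nonneg hx' hα0
    _ = ε := Real.rpow_inv_rpow hε.le hα0.ne'

lemma holder_abs_le (hα0 : 0 < α) (hα1 : α < 1) (hn : 1 ≤ n)
    {φ : EuclideanSpace ℝ (Fin n) → ℝ} (hφ : φ ∈ holderClass n α) (u : EuclideanSpace ℝ (Fin n)) :
    |φ u| ≤ 3 := by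
  obtain ⟨hsupp, -, hH⟩ := hφ
  by_cases hu : φ u = 0
  · rw [hu]; norm_num
  have humem : u ∈ closedBall (0 : EuclideanSpace ℝ (Fin n)) 1 :=
    hsupp (Function.mem_support.2 hu)
  rw [mem_closedBall, dist_zero_right] at humem
  set e : EuclideanSpace ℝ (Fin n) := EuclideanSpace.single ⟨0, hn⟩ (3 : ℝ) with he
  have hne : ‖e‖ = 3 := by
    rw [he, EuclideanSpace.norm_single]; norm_num
  have houter : φ (u + e) = 0 := by
    by_contra h
    have h1 := hsupp (Function.mem_support.2 h)
    rw [mem_closedBall, dist_zero_right] at h1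
    have h0 : (u + e) + (-u) = e := by abel
    have h2 : ‖e‖ ≤ ‖u + e‖ + ‖u‖ := by
      calc ‖e‖ = ‖(u + e) + (-u)‖ := by rw [h0]
        _ ≤ ‖u + e‖ + ‖-u‖ := norm_add_le _ _
        _ = ‖u + e‖ + ‖u‖ := by rw [norm_neg]
    rw [hne] at h2
    linarith
  have : |φ u| = |φ u - φ (u + e)| := by rw [houter, sub_zero]
  rw [this]
  calc |φ u - φ (u + e)| ≤ ‖u - (u + e)‖ ^ α := hH u (u + e)
    _ = 3 ^ α := by simp [hne]
    _ ≤ 3 ^ (1 : ℝ) := Real.rpow_le_rpow_of_exponent_le (by norm_num) hα1.le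
    _ = 3 := Real.rpow_one 3

lemma coord_le_norm (v : EuclideanSpace ℝ (Fin n)) (i : Fin n) : |v i| ≤ ‖v‖ := by
  rw [EuclideanSpace.norm_eq]
  have h1 : |v i| = Real.sqrt (‖v i‖ ^ 2) := by
    rw [Real.sqrt_sq_eq_abs]; simp
  rw [h1]
  apply Real.sqrt_le_sqrt
  exact Finset.single_le_sum (fun j _ => sq_nonneg ‖v j‖) (Finset.mem_univ i)

lemma norm_le_sqrt_mul (v : EuclideanSpace ℝ (Fin n)) {m : ℝ} (hm0 : 0 ≤ m)
    (hm : ∀ i, |v i| ≤ m) : ‖v‖ ≤ Real.sqrt n * m := by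
  rw [EuclideanSpace.norm_eq]
  have : ∑ i, ‖v i‖ ^ 2 ≤ (n : ℝ) * m ^ 2 := by
    calc ∑ i, ‖v i‖ ^ 2 ≤ ∑ _i : Fin n, m ^ 2 := by
          apply Finset.sum_le_sum
          intro i _
          have := hm i
          have h2 : ‖v i‖ = |v i| := by simp
          rw [h2]
          nlinarith [abs_nonneg (v i)]
      _ = (n : ℝ) * m ^ 2 := by simp [mul_comm]
  calc Real.sqrt (∑ i, ‖v i‖ ^ 2) ≤ Real.sqrt ((n : ℝ) * m ^ 2) := Real.sqrt_le_sqrt this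
    _ = Real.sqrt n * m := by
        rw [Real.sqrt_mul (Nat.cast_nonneg n), Real.sqrt_sq hm0]
/-- If the dilated φ misses the support of `a`, the convolution vanishes. -/
lemma convDil_eq_zero {a φ : EuclideanSpace ℝ (Fin n) → ℝ} {t : ℝ} (ht : 0 < t)
    (hφ : Function.support φ ⊆ closedBall 0 1) (y : EuclideanSpace ℝ (Fin n))
    (h : ∀ z, a z ≠ 0 → t < ‖y - z‖) : convDil n a φ t y = 0 := by
  rw [convDil]
  apply integral_eq_zero_of_ae
  apply Filter.Eventually.of_forall
  intro z
  by_cases hz : a z = 0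
  · simp [hz]
  · have h1 : t < ‖y - z‖ := h z hz
    have h2 : φ (t⁻¹ • (y - z)) = 0 := by
      by_contra hc
      have := hφ (Function.mem_support.2 hc)
      rw [mem_closedBall, dist_zero_right, norm_smul, norm_inv, Real.norm_eq_abs,
        abs_of_pos ht] at this
      have h3 : ‖y - z‖ ≤ t := by
        rw [inv_mul_le_iff₀ ht, mul_one] at this
        exact this
      linarith
    simp [h2]

lemma integrable_convDil_integrand {a φ : EuclideanSpace ℝ (Fin n) → ℝ}
    (ha : Integrable a volume) (hb : ∀ u, |φ u| ≤ 3) (hc : Continuous φ)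
    {t : ℝ} (ht : 0 < t) (y : EuclideanSpace ℝ (Fin n)) :
    Integrable (fun z => a z * ((t ^ n)⁻¹ * φ (t⁻¹ • (y - z)))) volume := by
  have : ∀ z, a z * ((t ^ n)⁻¹ * φ (t⁻¹ • (y - z)))
      = ((t ^ n)⁻¹ * φ (t⁻¹ • (y - z))) * a z := fun z => by ring
  simp_rw [this]
  apply ha.bdd_mul (c := (t ^ n)⁻¹ * 3)
  · exact (Continuous.mul continuous_const
      (hc.comp ((continuous_const.sub continuous_id).const_smul (t⁻¹ : ℝ)))).aestronglyMeasurable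
  · refine Filter.Eventually.of_forall (fun z => ?_)
    rw [norm_mul, Real.norm_eq_abs, Real.norm_eq_abs, abs_inv, abs_pow, abs_of_pos ht]
    exact mul_le_mul_of_nonneg_left (hb _) (by positivity)

/-- The key cancellation bound. -/
lemma convDil_abs_le (hα0 : 0 < α) (hα1 : α < 1) (hn : 1 ≤ n)
    {a : EuclideanSpace ℝ (Fin n) → ℝ} (ha : Integrable a volume)
    {x0 : EuclideanSpace ℝ (Fin n)} {r : ℝ} (hr : 0 < r)
    (hsupp : Function.support a ⊆ cube n x0 r) (hzero : (∫ z, a z) = 0)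
    {φ : EuclideanSpace ℝ (Fin n) → ℝ} (hφ : φ ∈ holderClass n α)
    {t : ℝ} (ht : 0 < t) (y : EuclideanSpace ℝ (Fin n)) :
    |convDil n a φ t y| ≤
      (∫ z, |a z|) * ((Real.sqrt n * (r / 2)) ^ α * (t ^ ((n : ℝ) + α))⁻¹) := by
  have hbdd := holder_abs_le hα0 hα1 hn hφ
  have hcont := holder_continuous hα0 hφ
  obtain ⟨hφs, hφ0, hφH⟩ := hφ
  set c : ℝ := (t ^ n)⁻¹ * φ (t⁻¹ • (y - x0)) with hc
  set K : ℝ := (Real.sqrt n * (r / 2)) ^ α * (t ^ ((n : ℝ) + α))⁻¹ with hK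
  have hK0 : 0 ≤ K := by
    apply mul_nonneg (Real.rpow_nonneg (by positivity) _)
    positivity
  have hint1 := integrable_convDil_integrand ha hbdd hcont ht y
  have hint2 : Integrable (fun z => a z * c) volume := ha.mul_const c
  have hzc : (∫ z, a z * c) = 0 := by
    rw [integral_mul_const, hzero, zero_mul]
  have hsplit : convDil n a φ t y = ∫ z, (a z * ((t ^ n)⁻¹ * φ (t⁻¹ • (y - z))) - a z * c) := by
    rw [integral_sub hint1 hint2, hzc, sub_zero, convDil]
  rw [hsplit]
  have hb : ∀ z, ‖a z * ((t ^ n)⁻¹ * φ (t⁻¹ • (y - z))) - a z * c‖ ≤ |a z| * K := by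
    intro z
    by_cases hz : a z = 0
    · simp [hz, hK0]
    · have hzQ : z ∈ cube n x0 r := hsupp (Function.mem_support.2 hz)
      have hd : ‖z - x0‖ ≤ Real.sqrt n * (r / 2) := by
        apply norm_le_sqrt_mul _ (by positivity)
        intro i
        have := hzQ i
        simpa [PiLp.sub_apply] using this
      have hHold : |φ (t⁻¹ • (y - z)) - φ (t⁻¹ • (y - x0))| ≤ (t⁻¹ * (Real.sqrt n * (r / 2))) ^ α := by
        calc |φ (t⁻¹ • (y - z)) - φ (t⁻¹ • (y - x0))|
            ≤ ‖t⁻¹ • (y - z) - t⁻¹ • (y - x0)‖ ^ α := hφH _ _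
          _ = (t⁻¹ * ‖x0 - z‖) ^ α := by
              rw [← smul_sub]
              have h1 : y - z - (y - x0) = x0 - z := by abel
              rw [h1, norm_smul, norm_inv, Real.norm_eq_abs, abs_of_pos ht]
          _ ≤ (t⁻¹ * (Real.sqrt n * (r / 2))) ^ α := by
              apply Real.rpow_le_rpow (by positivity)
              · have h2 : ‖x0 - z‖ = ‖z - x0‖ := norm_sub_rev _ _
                rw [h2]
                exact mul_le_mul_of_nonneg_left hd (by positivity)
              · exact hα0.le
      have heq : a z * ((t ^ n)⁻¹ * φ (t⁻¹ • (y - z))) - a z * c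
          = a z * ((t ^ n)⁻¹ * (φ (t⁻¹ • (y - z)) - φ (t⁻¹ • (y - x0)))) := by
        rw [hc]; ring
      rw [heq, Real.norm_eq_abs, abs_mul, abs_mul]
      apply mul_le_mul_of_nonneg_left _ (abs_nonneg _)
      rw [abs_inv, abs_pow, abs_of_pos ht]
      calc (t ^ n)⁻¹ * |φ (t⁻¹ • (y - z)) - φ (t⁻¹ • (y - x0))|
          ≤ (t ^ n)⁻¹ * (t⁻¹ * (Real.sqrt n * (r / 2))) ^ α := by
            exact mul_le_mul_of_nonneg_left hHold (by positivity)
        _ = K := by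
            rw [hK, Real.mul_rpow (by positivity) (by positivity),
              Real.inv_rpow ht.le, Real.rpow_add ht, ← Real.rpow_natCast t n,
              mul_inv]
            ring
  calc ‖∫ z, (a z * ((t ^ n)⁻¹ * φ (t⁻¹ • (y - z))) - a z * c)‖
      ≤ ∫ z, |a z| * K := by
        apply norm_integral_le_of_norm_le (ha.abs.mul_const K)
        exact Filter.Eventually.of_forall hb
    _ = (∫ z, |a z|) * K := integral_mul_const _ _
end AuxLemmas

open MeasureTheory Set Metric ENNReal

set_option maxHeartbeats 2000000 in
/-- Decay of the intrinsic Lusin area function of an atom outside the expanded cube. -/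
theorem sFun_atom_decay (n : ℕ) (hn : 1 ≤ n) (α : ℝ) (hα0 : 0 < α) (hα1 : α < 1)
    (p : ℝ) (hpdef : p = n / (n + α))
    (w : EuclideanSpace ℝ (Fin n) → ℝ) (hw : ∀ x, 0 ≤ w x)
    (hloc : MeasureTheory.LocallyIntegrable w volume) :
    ∃ C > 0, ∃ C' > 0, ∀ (a : EuclideanSpace ℝ (Fin n) → ℝ) (x0 : EuclideanSpace ℝ (Fin n))
      (r : ℝ) (x : EuclideanSpace ℝ (Fin n)),
      0 < r →
      MeasureTheory.Integrable a volume →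
      Function.support a ⊆ cube n x0 r →
      (∫ y, a y) = 0 →
      0 < (∫ y in cube n x0 r, w y) →
      (∫ y in cube n x0 r, |a y|) ≤ r ^ n * (∫ y in cube n x0 r, w y) ^ (-(1 / p)) →
      x ∉ cube n x0 (2 * Real.sqrt n * r) →
      sFun n α 1 a x ≤
        ENNReal.ofReal (C * r ^ ((n : ℝ) + α) /
          ((∫ y in cube n x0 r, w y) ^ (1 / p) * ‖x - x0‖ ^ ((n : ℝ) + α))) ∧
      sFun n α 1 a x ≤
        ENNReal.ofReal (C' * (∫ y in cube n x0 r, w y) ^ (-(1 / p))) := by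
  haveI : Nontrivial (EuclideanSpace ℝ (Fin n)) := by
    apply Module.nontrivial_of_finrank_pos (R := ℝ)
    rw [finrank_euclideanSpace_fin]; omega
  have hn1 : (1 : ℝ) ≤ n := by exact_mod_cast hn
  have hsn : 1 ≤ Real.sqrt n := by
    rw [show (1:ℝ) = Real.sqrt 1 by simp]
    exact Real.sqrt_le_sqrt hn1
  have hsn0 : 0 < Real.sqrt n := lt_of_lt_of_le one_pos hsn
  set β : ℝ := (n : ℝ) + α with hβ
  have hβ0 : 0 < β := by positivity
  set κ : ℝ := (volume (ball (0 : EuclideanSpace ℝ (Fin n)) 1)).toReal with hκdef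
  have hκ0 : 0 < κ := by
    rw [hκdef]
    exact ENNReal.toReal_pos (measure_ball_pos _ _ one_pos).ne' measure_ball_lt_top.ne
  have hballvol : volume (ball (0 : EuclideanSpace ℝ (Fin n)) 1) = ENNReal.ofReal κ := by
    rw [hκdef, ENNReal.ofReal_toReal measure_ball_lt_top.ne]
  set C : ℝ := Real.sqrt (κ / (2 * β)) * (Real.sqrt n / 2) ^ α * (4 * Real.sqrt n) ^ β with hC
  have hC0 : 0 < C := by
    apply mul_pos (mul_pos (Real.sqrt_pos.2 (by positivity)) _) (Real.rpow_pos_of_pos (by positivity) _)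
    exact Real.rpow_pos_of_pos (by positivity) _
  refine ⟨C, hC0, C, hC0, ?_⟩
  intro a x0 r x hr ha hsupp hzero hW hatom hx
  set W : ℝ := ∫ y in cube n x0 r, w y with hWdef
  set N : ℝ := r ^ n * W ^ (-(1 / p)) with hN
  have hWp : 0 < W ^ (-(1/p)) := Real.rpow_pos_of_pos hW _
  have hN0 : 0 < N := by positivity
  set d : ℝ := ‖x - x0‖ with hd
  -- a bad coordinate
  have hx' : ∃ i, Real.sqrt n * r < |x i - x0 i| := by
    by_contra hc
    push_neg at hc
    exact hx (fun i => (hc i).trans_eq (by ring))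
  obtain ⟨i, hi⟩ := hx'
  have hd_big : Real.sqrt n * r < d := by
    refine hi.trans_le ?_
    have := coord_le_norm (x - x0) i
    simpa [PiLp.sub_apply] using this
  have hd0 : 0 < d := lt_trans (by positivity) hd_big
  have hrd : r < d := lt_of_le_of_lt (le_mul_of_one_le_left hr.le hsn) hd_big
  -- max coordinate
  obtain ⟨j, -, hj⟩ := Finset.exists_max_image Finset.univ
    (fun k => |x k - x0 k|) ⟨i, Finset.mem_univ i⟩
  set D : ℝ := |x j - x0 j| with hD
  have hD1 : d ≤ Real.sqrt n * D := by
    apply norm_le_sqrt_mul _ (abs_nonneg _)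
    intro k
    simpa [PiLp.sub_apply] using hj k (Finset.mem_univ k)
  have hDr : Real.sqrt n * r < Real.sqrt n * D := lt_of_lt_of_le hd_big hD1
  have hD2 : r < D := lt_of_mul_lt_mul_left hDr hsn0.le
  set T : ℝ := d / (4 * Real.sqrt n) with hT
  have hT0 : 0 < T := by positivity
  have hTD : T ≤ D / 4 := by
    rw [hT, div_le_div_iff₀ (by positivity) (by norm_num)]
    calc d * 4 ≤ Real.sqrt n * D * 4 := by linarith
      _ = D * (4 * Real.sqrt n) := by ring
  -- vanishing for small t
  have key1 : ∀ t : ℝ, 0 < t → t ≤ T → ∀ y ∈ ball x t, intA n α a y t = 0 := by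
    intro t ht htT y hy
    apply le_antisymm _ (zero_le)
    apply iSup₂_le
    intro φ hφ
    rw [convDil_eq_zero ht hφ.1 y ?_]
    · simp
    · intro z hz
      have hzQ : z ∈ cube n x0 r := hsupp (Function.mem_support.2 hz)
      have h1 : |z j - x0 j| ≤ r / 2 := hzQ j
      have h2 : |x j - y j| ≤ ‖x - y‖ := by
        simpa [PiLp.sub_apply] using coord_le_norm (x - y) j
      have h3 : ‖x - y‖ < t := by
        rw [mem_ball, dist_eq_norm] at hy
        rw [show x - y = -(y - x) by abel, norm_neg]
        exact hy
      have h4 : |y j - z j| ≤ ‖y - z‖ := by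
        simpa [PiLp.sub_apply] using coord_le_norm (y - z) j
      have h5 : D ≤ |x j - y j| + |y j - z j| + |z j - x0 j| := by
        rw [hD]
        calc |x j - x0 j| ≤ |x j - z j| + |z j - x0 j| := abs_sub_le _ _ _
          _ ≤ (|x j - y j| + |y j - z j|) + |z j - x0 j| := by
              exact add_le_add_left (abs_sub_le _ _ _) _
      have h6 : t ≤ D / 4 := htT.trans hTD
      -- t < D - t - r/2 ≤ |y j - z j| ≤ ‖y - z‖
      nlinarith [hD2, h1, h2, h3, h4, h5, h6]
  -- uniform bound
  have hintabs : (∫ z, |a z|) ≤ N := by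
    rw [← setIntegral_eq_integral_of_forall_compl_eq_zero
      (f := fun z => |a z|) (s := cube n x0 r) (fun z hz => ?_)]
    · exact hatom
    · rw [abs_eq_zero]
      by_contra hc
      exact hz (hsupp (Function.mem_support.2 hc))
  have key2 : ∀ t : ℝ, 0 < t → ∀ y, intA n α a y t ≤
      ENNReal.ofReal (N * ((Real.sqrt n * (r / 2)) ^ α * (t ^ β)⁻¹)) := by
    intro t ht y
    apply iSup₂_le
    intro φ hφ
    apply ENNReal.ofReal_le_ofReal
    calc |convDil n a φ t y| ≤
        (∫ z, |a z|) * ((Real.sqrt n * (r / 2)) ^ α * (t ^ β)⁻¹) :=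
          convDil_abs_le hα0 hα1 hn ha hr hsupp hzero hφ ht y
      _ ≤ N * ((Real.sqrt n * (r / 2)) ^ α * (t ^ β)⁻¹) := by
          apply mul_le_mul_of_nonneg_right hintabs (by positivity)
  -- setup constants for the t-integral
  set sα : ℝ := (Real.sqrt n * (r / 2)) ^ α with hsα
  have hsα0 : 0 < sα := Real.rpow_pos_of_pos (by positivity) _
  set q : ℝ := -(2 * β + 1) with hqdef
  have hq : q < -1 := by rw [hqdef]; linarith
  have hq1 : q + 1 = -(2 * β) := by rw [hqdef]; ring
  set cc : ℝ := κ * (N * sα) ^ 2 with hcc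
  -- pointwise identity on (T, ∞)
  have hreal : ∀ t : ℝ, 0 < t →
      κ * t ^ n * (N * (sα * (t ^ β)⁻¹)) ^ 2 * (t ^ (n + 1))⁻¹ = cc * t ^ q := by
    intro t ht
    have h1 : (t : ℝ) ^ n = t ^ ((n : ℝ)) := by rw [← Real.rpow_natCast t n]
    have h2 : (t : ℝ) ^ (n + 1) = t ^ (((n : ℝ)) + 1) := by
      rw [← Real.rpow_natCast t (n + 1)]; push_cast; ring_nf
    have h3 : ((t ^ β)⁻¹) ^ 2 = t ^ (-(2 * β)) := by
      rw [← Real.rpow_neg ht.le, ← Real.rpow_natCast (t ^ (-β)) 2, ← Real.rpow_mul ht.le]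
      congr 1
      push_cast
      ring
    have h4 : (t ^ (((n : ℝ)) + 1))⁻¹ = t ^ (-(((n : ℝ)) + 1)) := by
      rw [← Real.rpow_neg ht.le]
    have h5 : t ^ ((n : ℝ)) * t ^ (-(2 * β)) * t ^ (-(((n : ℝ)) + 1)) = t ^ q := by
      rw [← Real.rpow_add ht, ← Real.rpow_add ht]
      congr 1
      rw [hqdef, hβ]; ring
    calc κ * t ^ n * (N * (sα * (t ^ β)⁻¹)) ^ 2 * (t ^ (n + 1))⁻¹
        = κ * (N * sα) ^ 2 * (t ^ n * ((t ^ β)⁻¹) ^ 2 * (t ^ (n + 1))⁻¹) := by ring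
      _ = κ * (N * sα) ^ 2 * (t ^ ((n : ℝ)) * t ^ (-(2 * β)) * t ^ (-(((n : ℝ)) + 1))) := by
          rw [h1, h2, h3, h4]
      _ = cc * t ^ q := by rw [h5, hcc]
  -- the ENNReal bound for the inner integral
  set G : ℝ → ℝ≥0∞ := fun t => (Ioi T).indicator
    (fun t => ENNReal.ofReal cc * ENNReal.ofReal (t ^ q)) t with hG
  have hstep1 : ∀ t ∈ Ioi (0 : ℝ),
      (∫⁻ y in ball x (1 * t), (intA n α a y t) ^ 2 * (ENNReal.ofReal (t ^ (n + 1)))⁻¹) ≤ G t := by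
    intro t ht
    rw [mem_Ioi] at ht
    rw [one_mul]
    by_cases htT : t ≤ T
    · have hzero' : (∫⁻ y in ball x t, (intA n α a y t) ^ 2 * (ENNReal.ofReal (t ^ (n + 1)))⁻¹)
          ≤ ∫⁻ _y in ball x t, 0 := by
        apply setLIntegral_mono' measurableSet_ball
        intro y hy
        rw [key1 t ht htT y hy]
        simp
      rw [hG]
      simp only [Set.indicator_of_notMem (by simpa using htT : t ∉ Ioi T)]
      simpa using hzero'
    · push_neg at htT
      have hcalc : (∫⁻ y in ball x t, (intA n α a y t) ^ 2 * (ENNReal.ofReal (t ^ (n + 1)))⁻¹)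
          ≤ (ENNReal.ofReal (N * (sα * (t ^ β)⁻¹))) ^ 2 * (ENNReal.ofReal (t ^ (n + 1)))⁻¹
            * volume (ball x t) := by
        rw [← setLIntegral_const (ball x t) _]
        apply setLIntegral_mono' measurableSet_ball
        intro y _
        exact mul_le_mul_left (pow_le_pow_left' (key2 t ht y) 2) _
      refine hcalc.trans_eq ?_
      rw [Measure.addHaar_ball (μ := (volume : Measure (EuclideanSpace ℝ (Fin n)))) x ht.le, hballvol, finrank_euclideanSpace_fin]
      rw [hG]
      simp only [Set.indicator_of_mem (mem_Ioi.2 htT)]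
      have hNK0 : 0 ≤ N * (sα * (t ^ β)⁻¹) := by positivity
      have htn1 : 0 < t ^ (n + 1) := by positivity
      rw [← ENNReal.ofReal_pow hNK0, ← ENNReal.ofReal_inv_of_pos htn1,
        ← ENNReal.ofReal_mul (by positivity), ← ENNReal.ofReal_mul (by positivity),
        ← ENNReal.ofReal_mul (by positivity), ← ENNReal.ofReal_mul (by positivity)]
      congr 1
      rw [← hreal t ht]
      ring
  -- integrate G
  have hIoi : Ioi T ∩ Ioi (0 : ℝ) = Ioi T :=
    inter_eq_self_of_subset_left (Ioi_subset_Ioi hT0.le)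
  have hGint : (∫⁻ t in Ioi (0 : ℝ), G t)
      = ENNReal.ofReal cc * ENNReal.ofReal (∫ t in Ioi T, t ^ q) := by
    rw [hG, lintegral_indicator measurableSet_Ioi, Measure.restrict_restrict measurableSet_Ioi,
      hIoi, lintegral_const_mul' _ _ ENNReal.ofReal_ne_top]
    congr 1
    rw [← ofReal_integral_eq_lintegral_ofReal (integrableOn_Ioi_rpow_of_lt hq hT0)]
    filter_upwards [ae_restrict_mem measurableSet_Ioi] with t ht
    exact Real.rpow_nonneg (le_of_lt (hT0.trans ht)) q
  set ρ : ℝ := cc * (-T ^ (q + 1) / (q + 1)) with hρ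
  set S : ℝ := C * r ^ β * (W ^ (-(1 / p)) * (d ^ β)⁻¹) with hS
  have hS0 : 0 ≤ S := by positivity
  -- the key real identity ρ = S ^ 2
  have e0 : T ^ (-β) = (d ^ β)⁻¹ * (4 * Real.sqrt n) ^ β := by
    rw [Real.rpow_neg hT0.le, hT, Real.div_rpow hd0.le (by positivity), inv_div,
      div_eq_mul_inv, mul_comm]
  have e1 : T ^ (q + 1) = ((d ^ β)⁻¹ * (4 * Real.sqrt n) ^ β) ^ 2 := by
    rw [hq1, show -(2 * β) = (-β) + (-β) by ring, Real.rpow_add hT0, e0]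
    ring
  have e2 : sα = (Real.sqrt n / 2) ^ α * r ^ α := by
    rw [hsα, show Real.sqrt n * (r / 2) = (Real.sqrt n / 2) * r by ring,
      Real.mul_rpow (by positivity) hr.le]
  have e2' : (r : ℝ) ^ n * r ^ α = r ^ β := by
    rw [← Real.rpow_natCast r n, ← Real.rpow_add hr, hβ]
  have h2β : (2 : ℝ) * β ≠ 0 := by positivity
  set u : ℝ := Real.sqrt (κ / (2 * β)) with hu_def
  have hu : u ^ 2 = κ / (2 * β) := Real.sq_sqrt (by positivity)
  have e3 : κ = u ^ 2 * (2 * β) := by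
    rw [hu]; field_simp
  have hρS : ρ = S ^ 2 := by
    apply mul_right_cancel₀ h2β
    rw [hρ, e1, hq1, neg_div_neg_eq, mul_assoc, div_mul_cancel₀ _ h2β]
    rw [hcc, hS, hC, hN, e2, e3, ← e2']
    ring
  have hρ0 : 0 ≤ ρ := hρS ▸ sq_nonneg S
  -- assemble
  have hmain : sFun n α 1 a x ≤ ENNReal.ofReal S := by
    rw [sFun]
    have hdouble : (∫⁻ t in Ioi (0 : ℝ), ∫⁻ y in ball x (1 * t),
        (intA n α a y t) ^ 2 * (ENNReal.ofReal (t ^ (n + 1)))⁻¹) ≤ ENNReal.ofReal ρ := by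
      calc (∫⁻ t in Ioi (0 : ℝ), ∫⁻ y in ball x (1 * t),
          (intA n α a y t) ^ 2 * (ENNReal.ofReal (t ^ (n + 1)))⁻¹)
          ≤ ∫⁻ t in Ioi (0 : ℝ), G t := by
            apply setLIntegral_mono' measurableSet_Ioi hstep1
        _ = ENNReal.ofReal cc * ENNReal.ofReal (∫ t in Ioi T, t ^ q) := hGint
        _ = ENNReal.ofReal ρ := by
            rw [integral_Ioi_rpow_of_lt hq hT0, ← ENNReal.ofReal_mul (by positivity), hρ]
    calc (∫⁻ t in Ioi (0 : ℝ), ∫⁻ y in ball x (1 * t),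
        (intA n α a y t) ^ 2 * (ENNReal.ofReal (t ^ (n + 1)))⁻¹) ^ (1/2 : ℝ)
        ≤ (ENNReal.ofReal ρ) ^ (1/2 : ℝ) := ENNReal.rpow_le_rpow hdouble (by norm_num)
      _ = ENNReal.ofReal (ρ ^ (1/2 : ℝ)) := ENNReal.ofReal_rpow_of_nonneg hρ0 (by norm_num)
      _ = ENNReal.ofReal S := by
          rw [hρS, ← Real.rpow_natCast S 2, ← Real.rpow_mul hS0]
          norm_num
  constructor
  · refine hmain.trans_eq ?_
    congr 1
    have h1 : W ^ (1/p : ℝ) ≠ 0 := (Real.rpow_pos_of_pos hW _).ne'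
    have h2 : d ^ β ≠ 0 := (Real.rpow_pos_of_pos hd0 _).ne'
    rw [hS, Real.rpow_neg hW.le, eq_div_iff (mul_ne_zero h1 h2)]
    field_simp
  · refine hmain.trans (ENNReal.ofReal_le_ofReal ?_)
    have hfrac : r ^ β * (d ^ β)⁻¹ ≤ 1 := by
      rw [← div_eq_mul_inv, div_le_one (by positivity)]
      exact Real.rpow_le_rpow hr.le hrd.le hβ0.le
    calc S = (C * W ^ (-(1 / p))) * (r ^ β * (d ^ β)⁻¹) := by rw [hS]; ring
      _ ≤ (C * W ^ (-(1 / p))) * 1 := by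
          apply mul_le_mul_of_nonneg_left hfrac (by positivity)
      _ = C * W ^ (-(1 / p)) := mul_one _
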